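/- Let (τ_k) be i.i.d. copies of a positive-integer-valued random variable τ with P{τ=1} > 0 and p_j := P{τ = j} = 2^{-j} for j ∈ ℕ. Define the random walk with barrier n ≥ 2 by W_0(n) = 0 and W_k(n) = W_{k-1}(n) + τ_k·1{W_{k-1}(n) + τ_k < n}. Let Z_n* be the number of zero increments of (W_k(n)) before the walk's absorption (i.e., the number of k with W_k(n) = W_{k-1}(n) < n-1). Then P{Z_n* = m} = 2^{-(m+1)} for all m ∈ ℕ_0. -/

import Mathlib

open MeasureTheory ProbabilityTheory Set
open scoped ENNReal NNReal

namespace BWalk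

noncomputable section

/-- next state of the barrier walk -/
def nxt (n s t : ℕ) : ℕ := s + if s + t < n then t else 0

/-- final state after consuming a list of steps -/
def fin' (n : ℕ) : ℕ → List ℕ → ℕ
  | s, [] => s
  | s, t :: l => fin' n (nxt n s t) l

/-- number of counted zero increments along a list of steps -/
def zc (n : ℕ) : ℕ → List ℕ → ℕ
  | _, [] => 0
  | s, t :: l => (if nxt n s t = s ∧ s < n - 1 then 1 else 0) + zc n (nxt n s t) l

/-- admissible absorption trajectories from state `s` with `m` zero increments -/
def Good (n s m : ℕ) : Set (List ℕ) :=
  {l | (∀ t ∈ l, 1 ≤ t) ∧ fin' n s l = n - 1 ∧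
       (∀ i < l.length, fin' n s (l.take i) < n - 1) ∧ zc n s l = m}

def w (l : List ℕ) : ℝ≥0∞ := 2⁻¹ ^ l.sum

def F (n s m : ℕ) : ℝ≥0∞ := ∑' l : List ℕ, (Good n s m).indicator w l

lemma fin'_append (n : ℕ) (l l' : List ℕ) : ∀ s, fin' n s (l ++ l') = fin' n (fin' n s l) l' := by
  induction l with
  | nil => intro s; rfl
  | cons t l ih => intro s; simp only [List.cons_append, fin']; exact ih _

lemma zc_append (n : ℕ) (l l' : List ℕ) : ∀ s,
    zc n s (l ++ l') = zc n s l + zc n (fin' n s l) l' := by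
  induction l with
  | nil => intro s; simp [zc, fin']
  | cons t l ih =>
    intro s
    rw [List.cons_append]
    show (if _ then 1 else 0) + zc n (nxt n s t) (l ++ l') = _
    rw [ih]
    simp only [zc, fin']
    omega

lemma good_nil {n s m : ℕ} : ([] : List ℕ) ∈ Good n s m ↔ s = n - 1 ∧ m = 0 := by
  simp [Good, fin', zc, eq_comm]

lemma hn2 {n s : ℕ} (hs : s < n - 1) : 2 ≤ n := by omega

lemma good_cons_small {n s m t : ℕ} {l : List ℕ} (hs : s < n - 1) (ht1 : 1 ≤ t)
    (htd : s + t ≤ n - 1) : (t :: l) ∈ Good n s m ↔ l ∈ Good n (s + t) m := by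
  have hnx : nxt n s t = s + t := by unfold nxt; rw [if_pos (by omega)]
  constructor
  · rintro ⟨hpos, hfin, hpre, hz⟩
    refine ⟨fun x hx => hpos x (List.mem_cons_of_mem _ hx), ?_, ?_, ?_⟩
    · simpa [fin', hnx] using hfin
    · intro i hi
      have := hpre (i + 1) (by simpa using Nat.succ_lt_succ hi)
      simpa [fin', hnx] using this
    · have : zc n s (t :: l) = zc n (s + t) l := by
        simp [zc, hnx]; omega
      rw [this] at hz; exact hz
  · rintro ⟨hpos, hfin, hpre, hz⟩
    refine ⟨?_, ?_, ?_, ?_⟩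
    · intro x hx; rcases List.mem_cons.1 hx with h | h
      · omega
      · exact hpos x h
    · simpa [fin', hnx] using hfin
    · intro i hi
      cases i with
      | zero => simpa [fin'] using hs
      | succ j =>
        have hj : j < l.length := by simpa using hi
        simpa [fin', hnx] using hpre j hj
    · simp [zc, hnx, hz]; omega

lemma good_cons_big {n s m t : ℕ} {l : List ℕ} (hs : s < n - 1) (ht : n ≤ s + t) :
    (t :: l) ∈ Good n s m ↔ ∃ m', m = m' + 1 ∧ l ∈ Good n s m' := by
  have hnx : nxt n s t = s := by unfold nxt; rw [if_neg (by omega)]; omega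
  have ht1 : 1 ≤ t := by omega
  constructor
  · rintro ⟨hpos, hfin, hpre, hz⟩
    have hzc : zc n s (t :: l) = 1 + zc n s l := by simp [zc, hnx, hs]
    refine ⟨zc n s l, by omega, fun x hx => hpos x (List.mem_cons_of_mem _ hx), ?_, ?_, rfl⟩
    · simpa [fin', hnx] using hfin
    · intro i hi
      have := hpre (i + 1) (by simpa using Nat.succ_lt_succ hi)
      simpa [fin', hnx] using this
  · rintro ⟨m', rfl, hpos, hfin, hpre, hz⟩
    refine ⟨?_, ?_, ?_, ?_⟩
    · intro x hx; rcases List.mem_cons.1 hx with h | h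
      · omega
      · exact hpos x h
    · simpa [fin', hnx] using hfin
    · intro i hi
      cases i with
      | zero => simpa [fin'] using hs
      | succ j =>
        have hj : j < l.length := by simpa using hi
        simpa [fin', hnx] using hpre j hj
    · simp [zc, hnx, hs, hz]; omega

/-- splitting a tsum over lists into nil and cons parts -/
lemma tsum_list (f : List ℕ → ℝ≥0∞) :
    ∑' l : List ℕ, f l = f [] + ∑' t : ℕ, ∑' l : List ℕ, f (t :: l) := by
  set f0 : List ℕ → ℝ≥0∞ := fun l => if l = [] then f l else 0 with hf0
  set f1 : List ℕ → ℝ≥0∞ := fun l => if l = [] then 0 else f l with hf1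
  have hsplit : ∀ l, f l = f0 l + f1 l := by
    intro l; by_cases h : l = [] <;> simp [f0, f1, h]
  have hinj : Function.Injective (fun p : ℕ × List ℕ => p.1 :: p.2) := by
    rintro ⟨a, l⟩ ⟨b, l'⟩ h; simpa using h
  have hsupp : Function.support f1 ⊆ Set.range (fun p : ℕ × List ℕ => p.1 :: p.2) := by
    intro l hl
    cases l with
    | nil => simp [f1] at hl
    | cons t l => exact ⟨(t, l), rfl⟩
  calc ∑' l, f l = ∑' l, (f0 l + f1 l) := tsum_congr hsplit
    _ = ∑' l, f0 l + ∑' l, f1 l := ENNReal.tsum_add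
    _ = f [] + ∑' l, f1 l := by
        congr 1
        rw [tsum_eq_single ([] : List ℕ) (by intro l hl; simp [f0, hl])]
        simp [f0]
    _ = f [] + ∑' p : ℕ × List ℕ, f1 (p.1 :: p.2) := by
        rw [hinj.tsum_eq hsupp]
    _ = f [] + ∑' p : ℕ × List ℕ, f (p.1 :: p.2) := by
        have h : ∀ p : ℕ × List ℕ, f1 (p.1 :: p.2) = f (p.1 :: p.2) := fun p => by simp [f1]
        exact congrArg (f [] + ·) (tsum_congr h)
    _ = _ := congrArg (f [] + ·) (ENNReal.tsum_prod (f := fun t l => f (t :: l)))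

lemma F_top (n m : ℕ) : F n (n - 1) m = if m = 0 then 1 else 0 := by
  have h : ∀ l : List ℕ, (Good n (n - 1) m).indicator w l
      = if l = [] ∧ m = 0 then 1 else 0 := by
    intro l
    cases l with
    | nil =>
      by_cases hm : m = 0 <;> simp [Set.indicator, good_nil, hm, w]
    | cons t l =>
      rw [Set.indicator_of_notMem, if_neg (by simp)]
      rintro ⟨hpos, hfin, hpre, hz⟩
      have := hpre 0 (by simp)
      simp [fin'] at this
  calc F n (n-1) m = ∑' l : List ℕ, if l = [] ∧ m = 0 then 1 else 0 := by
        unfold F; exact tsum_congr h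
    _ = _ := by
        by_cases hm : m = 0
        · rw [tsum_eq_single ([] : List ℕ) (by intro l hl; simp [hl])]
          simp [hm]
        · simp [hm]


lemma wcons (t : ℕ) (l : List ℕ) : w (t :: l) = 2⁻¹ ^ t * w l := by
  simp [w, pow_add]

lemma geo_sum : ∀ k, (∑ t ∈ Finset.range k, (2⁻¹ : ℝ≥0∞) ^ (t + 1)) + 2⁻¹ ^ k = 1 := by
  intro k
  induction k with
  | zero => simp
  | succ k ih =>
    rw [Finset.sum_range_succ, add_assoc]
    have h2 : (2⁻¹ : ℝ≥0∞) ^ (k + 1) + 2⁻¹ ^ (k + 1) = 2⁻¹ ^ k := by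
      rw [pow_succ, ← mul_add, ENNReal.inv_two_add_inv_two, mul_one]
    rw [h2, ih]

lemma tail_geo (d : ℕ) : ∑' t : ℕ, (2⁻¹ : ℝ≥0∞) ^ (t + (d + 1)) = 2⁻¹ ^ d := by
  calc ∑' t : ℕ, (2⁻¹ : ℝ≥0∞) ^ (t + (d + 1))
      = ∑' t : ℕ, (2⁻¹ : ℝ≥0∞) ^ t * 2⁻¹ ^ (d + 1) := by
        exact tsum_congr fun t => by rw [pow_add]
    _ = (1 - 2⁻¹)⁻¹ * 2⁻¹ ^ (d + 1) := by rw [ENNReal.tsum_mul_right, ENNReal.tsum_geometric]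
    _ = 2⁻¹ ^ d := by
        rw [ENNReal.one_sub_inv_two, inv_inv, pow_succ, ← mul_assoc, mul_comm (2 : ℝ≥0∞),
          mul_assoc, ENNReal.mul_inv_cancel (by norm_num) ENNReal.ofNat_ne_top, mul_one]

/-- the `m ↦ m - 1` shifted value `F n s (m-1)` (0 for `m = 0`) -/
def Bv (n s : ℕ) : ℕ → ℝ≥0∞
  | 0 => 0
  | m' + 1 => F n s m'

@[simp] lemma Bv_zero (n s : ℕ) : Bv n s 0 = 0 := rfl
@[simp] lemma Bv_succ (n s m' : ℕ) : Bv n s (m' + 1) = F n s m' := rfl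

def gind (n s : ℕ) : ℕ → List ℕ → ℝ≥0∞
  | 0, _ => 0
  | m' + 1, l => (Good n s m').indicator w l

@[simp] lemma gind_zero (n s : ℕ) (l : List ℕ) : gind n s 0 l = 0 := rfl
@[simp] lemma gind_succ (n s m' : ℕ) (l : List ℕ) :
    gind n s (m' + 1) l = (Good n s m').indicator w l := rfl

lemma tsum_gind (n s m : ℕ) : ∑' l : List ℕ, gind n s m l = Bv n s m := by
  cases m with
  | zero => simp
  | succ m' => simp [F]

lemma indicator_cons_small {n s m t : ℕ} (hs : s < n - 1) (ht1 : 1 ≤ t)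
    (htd : s + t ≤ n - 1) (l : List ℕ) :
    (Good n s m).indicator w (t :: l) = 2⁻¹ ^ t * (Good n (s + t) m).indicator w l := by
  by_cases h : l ∈ Good n (s + t) m
  · rw [Set.indicator_of_mem ((good_cons_small hs ht1 htd).2 h), Set.indicator_of_mem h, wcons]
  · rw [Set.indicator_of_notMem (fun hc => h ((good_cons_small hs ht1 htd).1 hc)),
      Set.indicator_of_notMem h, mul_zero]

lemma indicator_cons_big {n s m t : ℕ} (hs : s < n - 1) (ht : n ≤ s + t) (l : List ℕ) :
    (Good n s m).indicator w (t :: l) = 2⁻¹ ^ t * gind n s m l := by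
  cases m with
  | zero =>
    rw [gind_zero, Set.indicator_of_notMem, mul_zero]
    intro hc
    obtain ⟨m', hm', _⟩ := (good_cons_big hs ht).1 hc
    omega
  | succ m' =>
    rw [gind_succ]
    by_cases h : l ∈ Good n s m'
    · rw [Set.indicator_of_mem ((good_cons_big hs ht).2 ⟨m', rfl, h⟩), Set.indicator_of_mem h,
        wcons]
    · rw [Set.indicator_of_notMem, Set.indicator_of_notMem h, mul_zero]
      intro hc
      obtain ⟨m'', hm'', hmem⟩ := (good_cons_big hs ht).1 hc
      obtain rfl : m'' = m' := by omega
      exact h hmem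

set_option maxHeartbeats 1000000 in
lemma F_rec {n s m : ℕ} (hs : s < n - 1) :
    F n s m = (∑ t ∈ Finset.range (n - 1 - s), 2⁻¹ ^ (t + 1) * F n (s + t + 1) m)
      + 2⁻¹ ^ (n - 1 - s) * Bv n s m := by
  set d := n - 1 - s with hd
  have hd1 : 1 ≤ d := by omega
  have hnil : (Good n s m).indicator w ([] : List ℕ) = 0 := by
    apply Set.indicator_of_notMem
    rw [good_nil]
    omega
  set g : ℕ → ℝ≥0∞ := fun t => ∑' l : List ℕ, (Good n s m).indicator w (t :: l) with hgdef
  have h0 : F n s m = ∑' t : ℕ, g t := by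
    rw [F, tsum_list, hnil, zero_add]
  have hsplit : ∑' t : ℕ, g t
      = (∑ t ∈ Finset.range (d + 1), g t) + ∑' t : ℕ, g (t + (d + 1)) :=
    (Summable.sum_add_tsum_nat_add' (f := g) (k := d + 1) ENNReal.summable).symm
  have hzero : g 0 = 0 := by
    rw [hgdef]
    refine Summable.tsum_eq_zero_iff ENNReal.summable |>.2 fun l => ?_
    apply Set.indicator_of_notMem
    rintro ⟨hpos, -, -, -⟩
    have := hpos 0 List.mem_cons_self
    omega
  have hfin : ∑ t ∈ Finset.range (d + 1), g t
      = ∑ t ∈ Finset.range d, 2⁻¹ ^ (t + 1) * F n (s + t + 1) m := by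
    rw [Finset.sum_range_succ', hzero, add_zero]
    refine Finset.sum_congr rfl fun t htmem => ?_
    have ht : t < d := Finset.mem_range.1 htmem
    rw [hgdef]
    simp only
    have heq : ∀ l : List ℕ, (Good n s m).indicator w ((t + 1) :: l)
        = 2⁻¹ ^ (t + 1) * (Good n (s + (t + 1)) m).indicator w l :=
      fun l => indicator_cons_small hs (by omega) (by omega) l
    rw [tsum_congr heq, ENNReal.tsum_mul_left, (by omega : s + (t + 1) = s + t + 1), F]
  have htail : ∑' t : ℕ, g (t + (d + 1)) = 2⁻¹ ^ d * Bv n s m := by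
    have hterm : ∀ t : ℕ, g (t + (d + 1)) = 2⁻¹ ^ (t + (d + 1)) * Bv n s m := by
      intro t
      rw [hgdef]
      simp only
      have heq : ∀ l : List ℕ, (Good n s m).indicator w ((t + (d + 1)) :: l)
          = 2⁻¹ ^ (t + (d + 1)) * gind n s m l :=
        fun l => indicator_cons_big hs (by omega) l
      rw [tsum_congr heq, ENNReal.tsum_mul_left, tsum_gind]
    rw [tsum_congr hterm, ENNReal.tsum_mul_right, tail_geo]
  rw [h0, hsplit, hfin, htail]

lemma F_eq {n : ℕ} : ∀ m s, s < n - 1 → F n s m = 2⁻¹ ^ (m + 1) := by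
  have alg : ∀ (D' m : ℕ) (C B : ℝ≥0∞), C + B = 2⁻¹ ^ m →
      (∑ t ∈ Finset.range D', (2⁻¹ : ℝ≥0∞) ^ (t + 1) * 2⁻¹ ^ (m + 1))
        + (2⁻¹ ^ (D' + 1) * C + 2⁻¹ ^ (D' + 1) * B) = 2⁻¹ ^ (m + 1) := by
    intro D' m C B hCB
    rw [← mul_add, hCB, ← Finset.sum_mul]
    calc (∑ t ∈ Finset.range D', (2⁻¹ : ℝ≥0∞) ^ (t + 1)) * 2⁻¹ ^ (m + 1)
          + 2⁻¹ ^ (D' + 1) * 2⁻¹ ^ m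
        = ((∑ t ∈ Finset.range D', (2⁻¹ : ℝ≥0∞) ^ (t + 1)) + 2⁻¹ ^ D') * 2⁻¹ ^ (m + 1) := by
          ring
      _ = 2⁻¹ ^ (m + 1) := by rw [geo_sum D', one_mul]
  have step : ∀ m : ℕ,
      (∀ s, s < n - 1 → Bv n s m + (if m = 0 then 1 else 0) = 2⁻¹ ^ m) →
      ∀ s, s < n - 1 → F n s m = 2⁻¹ ^ (m + 1) := by
    intro m hB
    have main : ∀ D s, s < n - 1 → n - 1 - s ≤ D → F n s m = 2⁻¹ ^ (m + 1) := by
      intro D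
      induction D with
      | zero => intro s hs hD; omega
      | succ D ih =>
        intro s hs hD
        obtain ⟨D', hD'⟩ : ∃ D'', n - 1 - s = D'' + 1 := ⟨n - 1 - s - 1, by omega⟩
        rw [F_rec hs, hD']
        have hlast : s + D' + 1 = n - 1 := by omega
        have hsum : ∑ t ∈ Finset.range (D' + 1), (2⁻¹ : ℝ≥0∞) ^ (t + 1) * F n (s + t + 1) m
            = (∑ t ∈ Finset.range D', (2⁻¹ : ℝ≥0∞) ^ (t + 1) * 2⁻¹ ^ (m + 1))
              + 2⁻¹ ^ (D' + 1) * (if m = 0 then 1 else 0) := by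
          rw [Finset.sum_range_succ]
          congr 1
          · refine Finset.sum_congr rfl fun t htmem => ?_
            have ht : t < D' := Finset.mem_range.1 htmem
            rw [ih (s + t + 1) (by omega) (by omega)]
          · rw [hlast, F_top]
        rw [hsum, add_assoc]
        exact alg D' m _ _ (by rw [add_comm]; exact hB s hs)
    exact fun s hs => main (n - 1 - s) s hs le_rfl
  intro m
  induction m with
  | zero =>
    refine step 0 ?_
    intro s hs
    simp
  | succ m ihm =>
    refine step (m + 1) ?_
    intro s hs
    simp only [Nat.succ_ne_zero, if_false, add_zero, Bv_succ]
    exact ihm s hs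


lemma sum_getD (l : List ℕ) : ∑ i ∈ Finset.range l.length, l.getD i 0 = l.sum := by
  induction l with
  | nil => simp
  | cons a l ih =>
    rw [List.length_cons, Finset.sum_range_succ']
    simp only [List.getD_cons_succ, List.getD_cons_zero, List.sum_cons, ih]
    omega

/-- the length-`k` prefix of the stream `t` -/
def pre (t : ℕ → ℕ) : ℕ → List ℕ
  | 0 => []
  | k + 1 => pre t k ++ [t k]

@[simp] lemma pre_length (t : ℕ → ℕ) : ∀ k, (pre t k).length = k := by
  intro k; induction k with
  | zero => rfl
  | succ k ih => simp [pre, ih]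

lemma pre_take (t : ℕ → ℕ) : ∀ K i, i ≤ K → (pre t K).take i = pre t i := by
  intro K
  induction K with
  | zero =>
    intro i hi
    have h0 : i = 0 := Nat.le_zero.1 hi
    subst h0
    rfl
  | succ K ih =>
    intro i hi
    rcases Nat.lt_succ_iff_lt_or_eq.1 (Nat.lt_succ_of_le hi) with h | rfl
    · have hiK : i ≤ K := by omega
      rw [pre, List.take_append_of_le_length (by rw [pre_length]; exact hiK), ih i hiK]
    · exact List.take_of_length_le (by rw [pre_length])

lemma pre_getD (t : ℕ → ℕ) : ∀ K i, i < K → (pre t K).getD i 0 = t i := by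
  intro K
  induction K with
  | zero => intro i hi; omega
  | succ K ih =>
    intro i hi
    rcases Nat.lt_succ_iff_lt_or_eq.1 hi with h | rfl
    · rw [pre, List.getD_append _ _ _ _ (by rw [pre_length]; exact h)]
      exact ih i h
    · rw [pre, List.getD_append_right _ _ _ _ (by rw [pre_length])]
      simp


lemma pre_mem (t : ℕ → ℕ) : ∀ K x, x ∈ pre t K → ∃ i, i < K ∧ x = t i := by
  intro K
  induction K with
  | zero => intro x hx; simp [pre] at hx
  | succ K ih =>
    intro x hx
    rw [pre, List.mem_append] at hx
    rcases hx with h | h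
    · obtain ⟨i, hi, rfl⟩ := ih x h
      exact ⟨i, by omega, rfl⟩
    · rw [List.mem_singleton] at h
      exact ⟨K, by omega, h⟩

end
end BWalk

open BWalk in
/-- **Random walk with barrier and geometric zero increments.**
Let `(τ_k)` be i.i.d. with `P{τ = j} = 2^{-j}` on `ℕ = {1,2,…}`, and define the
random walk with barrier `n ≥ 2` by `W_0 = 0`, `W_k = W_{k-1} + τ_k·1{W_{k-1}+τ_k < n}`.
Then the number `Z_n*` of zero increments before absorption (indices `k` with
`W_{k+1} = W_k < n-1`) satisfies `P{Z_n* = m} = 2^{-(m+1)}`. -/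
theorem barrier_walk_zero_increments_geometric
    {Ω : Type*} [MeasurableSpace Ω] (μ : Measure Ω) [IsProbabilityMeasure μ]
    (n : ℕ) (hn : 2 ≤ n)
    (τ : ℕ → Ω → ℕ) (hτmeas : ∀ k, Measurable (τ k))
    (hiid : iIndepFun τ μ)
    (hlaw : ∀ k j, 1 ≤ j → μ {ω | τ k ω = j} = ENNReal.ofReal ((1/2 : ℝ) ^ j))
    (hpos : ∀ k, ∀ᵐ ω ∂μ, 1 ≤ τ k ω)
    -- the walk with barrier `n`
    (walk : ℕ → Ω → ℕ)
    (hwalk0 : ∀ ω, walk 0 ω = 0)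
    (hwalk : ∀ k ω, walk (k + 1) ω =
      walk k ω + (if walk k ω + τ k ω < n then τ k ω else 0)) :
    ∀ m : ℕ,
      μ {ω | Set.ncard {k : ℕ | walk (k + 1) ω = walk k ω ∧ walk k ω < n - 1} = m}
        = ENNReal.ofReal ((1/2 : ℝ) ^ (m + 1)) := by
  classical
  intro m
  have ofr : ∀ j : ℕ, ENNReal.ofReal ((1/2 : ℝ) ^ j) = (2⁻¹ : ℝ≥0∞) ^ j := by
    intro j
    rw [ENNReal.ofReal_pow (by norm_num)]
    congr 1
    rw [show (1/2 : ℝ) = (2 : ℝ)⁻¹ by norm_num,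
      ENNReal.ofReal_inv_of_pos (by norm_num)]
    norm_num
  have hτlaw : ∀ k j, 1 ≤ j → μ (τ k ⁻¹' {j}) = (2⁻¹ : ℝ≥0∞) ^ j := by
    intro k j hj
    have hset : τ k ⁻¹' {j} = {ω | τ k ω = j} := by ext ω; simp
    rw [hset, hlaw k j hj, ofr]
  set t : Ω → ℕ → ℕ := fun ω i => τ i ω with htdef
  have hnxt : ∀ k ω, walk (k + 1) ω = nxt n (walk k ω) (t ω k) := by
    intro k ω; rw [hwalk]; rfl
  have hW : ∀ ω k, walk k ω = fin' n 0 (pre (t ω) k) := by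
    intro ω k
    induction k with
    | zero => rw [hwalk0]; rfl
    | succ k ih =>
      rw [hnxt, ih]
      show _ = fin' n 0 (pre (t ω) k ++ [t ω k])
      rw [fin'_append]
      rfl
  have hmono : ∀ ω, Monotone fun k => walk k ω := by
    intro ω
    refine monotone_nat_of_le_succ fun k => ?_
    rw [hwalk]
    exact Nat.le_add_right _ _
  have hle : ∀ ω k, walk k ω ≤ n - 1 := by
    intro ω k
    induction k with
    | zero => rw [hwalk0]; omega
    | succ k ih => rw [hwalk]; split_ifs with h <;> omega
  have hstay : ∀ ω K k, K ≤ k → walk K ω = n - 1 → walk k ω = n - 1 := by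
    intro ω K k hKk hK
    have h1 := hmono ω hKk
    have h2 := hle ω k
    simp only at h1
    omega
  have hZ : ∀ ω K, zc n 0 (pre (t ω) K)
      = ∑ i ∈ Finset.range K,
          (if walk (i + 1) ω = walk i ω ∧ walk i ω < n - 1 then 1 else 0) := by
    intro ω K
    induction K with
    | zero => simp [pre, zc]
    | succ K ih =>
      rw [pre, zc_append, ih, Finset.sum_range_succ]
      congr 1
      rw [← hW]
      show (if nxt n (walk K ω) (t ω K) = walk K ω ∧ walk K ω < n - 1 then 1 else 0) + 0 = _
      rw [add_zero, ← hnxt]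
  have hcount : ∀ ω K, walk K ω = n - 1 →
      Set.ncard {k : ℕ | walk (k + 1) ω = walk k ω ∧ walk k ω < n - 1}
        = zc n 0 (pre (t ω) K) := by
    intro ω K hK
    have hset : {k : ℕ | walk (k + 1) ω = walk k ω ∧ walk k ω < n - 1}
        = ↑((Finset.range K).filter
            fun k => walk (k + 1) ω = walk k ω ∧ walk k ω < n - 1) := by
      ext k
      simp only [Set.mem_setOf_eq, Finset.coe_filter, Finset.mem_range]
      constructor
      · rintro ⟨h1, h2⟩
        refine ⟨?_, h1, h2⟩
        by_contra hk
        have := hstay ω K k (by omega) hK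
        omega
      · rintro ⟨-, h⟩; exact h
    rw [hset, Set.ncard_coe_finset, Finset.card_filter, hZ]
  -- cylinders
  set Cyl : List ℕ → Set Ω := fun l => ⋂ i ∈ Finset.range l.length, τ i ⁻¹' {l.getD i 0}
    with hCyl
  have hCylmem : ∀ ω l, ω ∈ Cyl l ↔ ∀ i, i < l.length → τ i ω = l.getD i 0 := by
    intro ω l
    simp [hCyl, Set.mem_iInter]
  have hCylMeas : ∀ l, MeasurableSet (Cyl l) :=
    fun l => MeasurableSet.biInter (Set.to_countable _)
      fun i _ => hτmeas i (measurableSet_singleton _)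
  have hCylμ : ∀ l : List ℕ, (∀ x ∈ l, 1 ≤ x) → μ (Cyl l) = w l := by
    intro l hl
    rw [hCyl]
    rw [hiid.measure_inter_preimage_eq_mul (Finset.range l.length)
      (fun i _ => measurableSet_singleton _)]
    have hterm : ∀ i ∈ Finset.range l.length,
        μ (τ i ⁻¹' {l.getD i 0}) = (2⁻¹ : ℝ≥0∞) ^ (l.getD i 0) := by
      intro i hi
      have hilen : i < l.length := Finset.mem_range.1 hi
      refine hτlaw i _ (hl _ ?_)
      rw [List.getD_eq_getElem l 0 hilen]
      exact List.getElem_mem _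
    rw [Finset.prod_congr rfl hterm, Finset.prod_pow_eq_pow_sum, sum_getD]
    rfl
  -- the good event
  set G : Set Ω := {ω | (∀ k, 1 ≤ τ k ω) ∧ ∀ K, ∃ k, K ≤ k ∧ τ k ω = 1} with hG
  have hGnull : μ Gᶜ = 0 := by
    have hsub : Gᶜ ⊆ (⋃ k, {ω | τ k ω = 0}) ∪ ⋃ K, {ω | ∀ k, K ≤ k → τ k ω ≠ 1} := by
      intro ω hω
      rw [hG] at hω
      simp only [Set.mem_compl_iff, Set.mem_setOf_eq, not_and_or, not_forall] at hω
      rcases hω with h | h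
      · left
        obtain ⟨k, hk⟩ := h
        refine Set.mem_iUnion.2 ⟨k, ?_⟩
        simp only [Set.mem_setOf_eq]
        omega
      · right
        obtain ⟨K, hK⟩ := h
        refine Set.mem_iUnion.2 ⟨K, ?_⟩
        intro k hk h1
        exact hK ⟨k, hk, h1⟩
    refine measure_mono_null hsub (measure_union_null ?_ ?_)
    · refine measure_iUnion_null fun k => ?_
      have hk := hpos k
      rw [ae_iff] at hk
      refine measure_mono_null ?_ hk
      intro ω hω
      simp only [Set.mem_setOf_eq] at hω ⊢
      omega
    · refine measure_iUnion_null fun K => ?_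
      have hA : ∀ r : ℕ, μ {ω | ∀ k, K ≤ k → τ k ω ≠ 1} ≤ (2⁻¹ : ℝ≥0∞) ^ r := by
        intro r
        have hsub2 : {ω | ∀ k, K ≤ k → τ k ω ≠ 1}
            ⊆ ⋂ i ∈ Finset.Ico K (K + r), τ i ⁻¹' ({1}ᶜ) := by
          intro ω hω
          refine Set.mem_iInter₂.2 fun i hi => ?_
          exact hω i (Finset.mem_Ico.1 hi).1
        refine le_trans (measure_mono hsub2) ?_
        rw [hiid.measure_inter_preimage_eq_mul (Finset.Ico K (K + r))
          (fun i _ => (measurableSet_singleton _).compl)]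
        have hterm : ∀ i ∈ Finset.Ico K (K + r),
            μ (τ i ⁻¹' ({1}ᶜ)) = (2⁻¹ : ℝ≥0∞) := by
          intro i _
          rw [Set.preimage_compl,
            prob_compl_eq_one_sub (hτmeas i (measurableSet_singleton _)),
            hτlaw i 1 le_rfl, pow_one, ENNReal.one_sub_inv_two]
        rw [Finset.prod_congr rfl hterm, Finset.prod_const, Nat.card_Ico]
        simp
      have htend : Filter.Tendsto (fun r : ℕ => (2⁻¹ : ℝ≥0∞) ^ r)
          Filter.atTop (nhds 0) :=
        ENNReal.tendsto_pow_atTop_nhds_zero_of_lt_one (by norm_num)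
      exact le_zero_iff.1 (ge_of_tendsto' htend hA)
  -- absorption on the good event
  have habs : ∀ ω, (∀ k, 1 ≤ τ k ω) → (∀ K, ∃ k, K ≤ k ∧ τ k ω = 1) →
      ∃ K, walk K ω = n - 1 := by
    intro ω hω1 hω2
    have main : ∀ c K, n - 1 - walk K ω ≤ c → ∃ K', walk K' ω = n - 1 := by
      intro c
      induction c with
      | zero => intro K hK; exact ⟨K, by have := hle ω K; omega⟩
      | succ c ih =>
        intro K hK
        by_cases hKn : walk K ω = n - 1
        · exact ⟨K, hKn⟩
        obtain ⟨k, hKk, hk1⟩ := hω2 K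
        by_cases hkn : walk k ω = n - 1
        · exact ⟨k, hkn⟩
        have hwk : walk k ω < n - 1 := by have := hle ω k; omega
        have hstep : walk (k + 1) ω = walk k ω + 1 := by
          rw [hwalk, hk1, if_pos (by omega)]
        have hmK : walk K ω ≤ walk k ω := hmono ω hKk
        refine ih (k + 1) (by omega)
    exact main (n - 1 - walk 0 ω) 0 le_rfl
  set E : Set Ω := {ω | Set.ncard {k : ℕ | walk (k + 1) ω = walk k ω ∧ walk k ω < n - 1} = m}
    with hE
  set U : Set Ω := ⋃ l : ↥(Good n 0 m), Cyl ↑l with hU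
  have hEU : ∀ ω ∈ G, (ω ∈ E ↔ ω ∈ U) := by
    intro ω hω
    rw [hG] at hω
    obtain ⟨hω1, hω2⟩ := hω
    constructor
    · intro hωE
      have hex : ∃ K, walk K ω = n - 1 := habs ω hω1 hω2
      have hK : walk (Nat.find hex) ω = n - 1 := Nat.find_spec hex
      set K := Nat.find hex with hKdef
      have hKmin : ∀ j, j < K → walk j ω ≠ n - 1 := fun j hj => Nat.find_min hex hj
      have hlG : pre (t ω) K ∈ Good n 0 m := by
        refine ⟨?_, ?_, ?_, ?_⟩
        · intro x hx
          obtain ⟨i, hiK, rfl⟩ := pre_mem (t ω) K x hx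
          exact hω1 i
        · rw [← hW]; exact hK
        · intro i hi
          rw [pre_length] at hi
          rw [pre_take (t ω) K i (by omega), ← hW]
          have h1 := hle ω i
          have h2 := hKmin i hi
          omega
        · rw [← hcount ω K hK]; exact hωE
      refine Set.mem_iUnion.2 ⟨⟨pre (t ω) K, hlG⟩, ?_⟩
      rw [hCylmem]
      intro i hi
      rw [pre_length] at hi
      rw [pre_getD (t ω) K i hi]
    · intro hωU
      obtain ⟨⟨l, hlG⟩, hωl⟩ := Set.mem_iUnion.1 hωU
      rw [hCylmem] at hωl
      have hωl' : ∀ i, i < l.length → τ i ω = l.getD i 0 := hωl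
      obtain ⟨hl1, hl2, hl3, hl4⟩ := hlG
      have hpre : pre (t ω) l.length = l := by
        refine List.ext_getElem (by rw [pre_length]) fun i h1 h2 => ?_
        rw [pre_length] at h1
        rw [← List.getD_eq_getElem _ 0, ← List.getD_eq_getElem _ 0,
          pre_getD (t ω) _ i h1]
        simp only [htdef]
        exact hωl' i h2
      have hKabs : walk l.length ω = n - 1 := by rw [hW, hpre]; exact hl2
      show Set.ncard _ = m
      rw [hcount ω l.length hKabs, hpre, hl4]
  have hEaeU : E =ᵐ[μ] U := by
    rw [Filter.eventuallyEq_set]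
    have hGae : ∀ᵐ ω ∂μ, ω ∈ G := by
      rw [ae_iff]
      exact hGnull
    filter_upwards [hGae] with ω hωG
    exact hEU ω hωG
  have key : ∀ l l' : List ℕ, l ∈ Good n 0 m → l' ∈ Good n 0 m →
      l.length ≤ l'.length → ∀ ω, ω ∈ Cyl l → ω ∈ Cyl l' → l = l' := by
    intro l l' hl hl' hlen ω hc hc'
    rw [hCylmem] at hc hc'
    have htake : l'.take l.length = l := by
      refine List.ext_getElem (by rw [List.length_take]; omega) fun i h1 h2 => ?_
      rw [List.getElem_take]
      rw [← List.getD_eq_getElem _ 0, ← List.getD_eq_getElem _ 0]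
      rw [← hc' i (by omega), ← hc i h2]
    by_cases hlt : l.length < l'.length
    · exfalso
      have hc3 := hl'.2.2.1 l.length hlt
      rw [htake, hl.2.1] at hc3
      omega
    · have hll : l'.length ≤ l.length := by omega
      rw [← htake, List.take_of_length_le hll]
  have hdisj : Pairwise (Function.onFun Disjoint fun l : ↥(Good n 0 m) => Cyl ↑l) := by
    rintro ⟨l₁, hl₁⟩ ⟨l₂, hl₂⟩ hne
    rw [Function.onFun, Set.disjoint_left]
    intro ω h1 h2
    apply hne
    apply Subtype.ext
    rcases le_total l₁.length l₂.length with h | h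
    · exact key l₁ l₂ hl₁ hl₂ h ω h1 h2
    · exact (key l₂ l₁ hl₂ hl₁ h ω h2 h1).symm
  calc μ E = μ U := measure_congr hEaeU
    _ = ∑' l : ↥(Good n 0 m), μ (Cyl ↑l) := measure_iUnion hdisj fun l => hCylMeas ↑l
    _ = ∑' l : ↥(Good n 0 m), w ↑l := tsum_congr fun l => hCylμ l.1 l.2.1
    _ = F n 0 m := (tsum_subtype (Good n 0 m) w).trans rfl
    _ = 2⁻¹ ^ (m + 1) := F_eq m 0 (by omega)
    _ = ENNReal.ofReal ((1/2 : ℝ) ^ (m + 1)) := (ofr (m + 1)).symm
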